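/- arXiv:2408.15528 — 2 statements merged into one kernel-verified Lean document; each statement's English description precedes it below -/
import Mathlib

section
/- For an n-fold Pfister form φ over a field F (char ≠ 2), the group of similarity factors G(φ) equals the set of nonzero values represented by φ, D(φ). In particular if φ is isotropic (hence hyperbolic), G(φ) = F*. -/
/-- The `n`-fold Pfister form `⟨1, -a₁⟩ ⊗ ⋯ ⊗ ⟨1, -aₙ⟩` over `F`, realized as the
diagonal form on `(Fin n → Bool) → F` whose weight at a subset `s` is
`∏_{i ∈ s} (-aᵢ)`. -/
noncomputable def pfisterForm (F : Type*) [Field F] {n : ℕ} (a : Fin n → F) :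
    QuadraticForm F ((Fin n → Bool) → F) :=
  QuadraticMap.weightedSumSquares F
    (fun s : Fin n → Bool => ∏ i : Fin n, if s i then -a i else 1)

namespace PfisterAux

open QuadraticMap

variable {F : Type*} [Field F] {M M₁ M₂ : Type*} [AddCommGroup M] [Module F M]
  [AddCommGroup M₁] [Module F M₁] [AddCommGroup M₂] [Module F M₂]

lemma expand (ψ : QuadraticMap F M F) (s r : F) (x y : M) :
    ψ (s • x + r • y) = s * s * ψ x + s * r * polar ψ x y + r * r * ψ y := by
  have h : ψ (s • x + r • y) = ψ (s • x) + ψ (r • y) + polar ψ (s • x) (r • y) := by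
    simp only [QuadraticMap.polar]; ring
  rw [h, QuadraticMap.map_smul, QuadraticMap.map_smul, polar_smul_left, polar_smul_right]
  simp only [smul_eq_mul]; ring

lemma smul_equiv_congr {Q₁ : QuadraticMap F M₁ F} {Q₂ : QuadraticMap F M₂ F} (c : F)
    (h : Q₁.Equivalent Q₂) : (c • Q₁).Equivalent (c • Q₂) := by
  obtain ⟨e⟩ := h
  exact ⟨{ e.toLinearEquiv with
           map_app' := fun m => by
             have := e.map_app m
             simp only [QuadraticMap.smul_apply]
             rw [← this]; rfl }⟩

lemma sq_smul_equiv (ψ : QuadraticMap F M F) {u : F} (hu : u ≠ 0) :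
    ((u * u) • ψ).Equivalent ψ := by
  refine ⟨{ LinearEquiv.smulOfNeZero F M u hu with
            map_app' := fun m => ?_ }⟩
  have : (LinearEquiv.smulOfNeZero F M u hu) m = u • m := rfl
  show ψ ((LinearEquiv.smulOfNeZero F M u hu) m) = ((u * u) • ψ) m
  rw [this, QuadraticMap.map_smul, QuadraticMap.smul_apply]

lemma smul_prod_eq (c : F) (Q₁ : QuadraticMap F M₁ F) (Q₂ : QuadraticMap F M₂ F) :
    c • (Q₁.prod Q₂) = (c • Q₁).prod (c • Q₂) := by
  ext p
  simp only [QuadraticMap.smul_apply, QuadraticMap.prod_apply, smul_eq_mul, mul_add]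

/-- The key binary multiplicativity lemma: if `t = u² + c v²` is nonzero then
`t • (ψ ⊥ cψ) ≅ (ψ ⊥ cψ)`. -/
lemma key (ψ : QuadraticMap F M F) (c u v : F) (h : u * u + c * (v * v) ≠ 0) :
    ((u * u + c * (v * v)) • (ψ.prod (c • ψ))).Equivalent (ψ.prod (c • ψ)) := by
  set t := u * u + c * (v * v) with ht
  let f : M × M →ₗ[F] M × M :=
    (u • LinearMap.fst F M M + (-(c * v)) • LinearMap.snd F M M).prod
      (v • LinearMap.fst F M M + u • LinearMap.snd F M M)
  let g : M × M →ₗ[F] M × M :=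
    ((t⁻¹ * u) • LinearMap.fst F M M + (t⁻¹ * (c * v)) • LinearMap.snd F M M).prod
      ((-(t⁻¹ * v)) • LinearMap.fst F M M + (t⁻¹ * u) • LinearMap.snd F M M)
  have hfg : f.comp g = LinearMap.id := by
    apply LinearMap.ext; intro p
    simp only [f, g, LinearMap.comp_apply, LinearMap.prod_apply, Function.prod,
      LinearMap.add_apply, LinearMap.smul_apply, LinearMap.fst_apply, LinearMap.snd_apply,
      LinearMap.id_apply]
    ext <;> simp only [Prod.fst, Prod.snd] <;>
      · match_scalars <;> field_simp <;> ring
  have hgf : g.comp f = LinearMap.id := by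
    apply LinearMap.ext; intro p
    simp only [f, g, LinearMap.comp_apply, LinearMap.prod_apply, Function.prod,
      LinearMap.add_apply, LinearMap.smul_apply, LinearMap.fst_apply, LinearMap.snd_apply,
      LinearMap.id_apply]
    ext <;> simp only [Prod.fst, Prod.snd] <;>
      · match_scalars <;> field_simp <;> ring
  refine ⟨{ LinearEquiv.ofLinear (re₁₂ := RingHomInvPair.ids) (re₂₁ := RingHomInvPair.ids) f g hfg hgf with map_app' := fun p => ?_ }⟩
  show (ψ.prod (c • ψ)) (f p) = (t • (ψ.prod (c • ψ))) p
  simp only [f, LinearMap.prod_apply, Function.prod, LinearMap.add_apply, LinearMap.smul_apply,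
    LinearMap.fst_apply, LinearMap.snd_apply, QuadraticMap.prod_apply, QuadraticMap.smul_apply,
    smul_eq_mul, expand, QuadraticMap.coeFn_smul, QuadraticMap.polar_smul]
  ring

/-- Splitting `(Fin (n+1) → Bool) → F` as a product according to the last coordinate. -/
def splitEquiv (F : Type*) [Field F] (n : ℕ) :
    ((Fin (n+1) → Bool) → F) ≃ₗ[F] ((Fin n → Bool) → F) × ((Fin n → Bool) → F) where
  toFun v := (fun s => v (Fin.snoc s false), fun s => v (Fin.snoc s true))
  invFun p := fun s =>
    if s (Fin.last n) then p.2 (fun i => s i.castSucc) else p.1 (fun i => s i.castSucc)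
  map_add' _ _ := rfl
  map_smul' _ _ := rfl
  left_inv v := by
    funext s
    dsimp only
    by_cases h : s (Fin.last n) = true
    · rw [if_pos h]
      congr 1
      conv_rhs => rw [← Fin.snoc_init_self s]
      rw [h]
      rfl
    · rw [if_neg h]
      congr 1
      conv_rhs => rw [← Fin.snoc_init_self s]
      rw [Bool.not_eq_true] at h
      rw [h]
      rfl
  right_inv p := by
    refine Prod.ext ?_ ?_ <;> funext s <;>
      simp [Fin.snoc_last, Fin.snoc_castSucc]

/-- Reindexing equivalence sending `(s, b)` to `Fin.snoc s b`. -/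
def snocEquiv (n : ℕ) : (Fin n → Bool) × Bool ≃ (Fin (n+1) → Bool) where
  toFun p := Fin.snoc p.1 p.2
  invFun s := (fun i => s i.castSucc, s (Fin.last n))
  left_inv p := by
    refine Prod.ext ?_ ?_ <;> simp [Fin.snoc_castSucc, Fin.snoc_last]
  right_inv s := Fin.snoc_init_self s

lemma weight_snoc {F : Type*} [Field F] {n : ℕ} (a : Fin (n+1) → F) (s : Fin n → Bool)
    (b : Bool) :
    (∏ i : Fin (n+1), if (Fin.snoc s b : Fin (n+1) → Bool) i then -a i else 1)
      = (∏ i : Fin n, if s i then -a i.castSucc else 1)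
        * (if b then -a (Fin.last n) else 1) := by
  rw [Fin.prod_univ_castSucc]
  simp [Fin.snoc_castSucc, Fin.snoc_last]

lemma pfister_split (F : Type*) [Field F] {n : ℕ} (a : Fin (n+1) → F) :
    (pfisterForm F a).Equivalent
      ((pfisterForm F (fun i : Fin n => a i.castSucc)).prod
        ((-a (Fin.last n)) • pfisterForm F (fun i : Fin n => a i.castSucc))) := by
  refine ⟨{ splitEquiv F n with map_app' := fun v => ?_ }⟩
  show ((pfisterForm F (fun i : Fin n => a i.castSucc)).prod
        ((-a (Fin.last n)) • pfisterForm F (fun i : Fin n => a i.castSucc)))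
      (splitEquiv F n v) = pfisterForm F a v
  have h1 : ((splitEquiv F n) v).1 = fun s => v (Fin.snoc s false) := rfl
  have h2 : ((splitEquiv F n) v).2 = fun s => v (Fin.snoc s true) := rfl
  simp only [QuadraticMap.prod_apply, QuadraticMap.smul_apply, pfisterForm,
    QuadraticMap.weightedSumSquares_apply, smul_eq_mul, h1, h2]
  have hre : (∑ x : Fin (n+1) → Bool, (∏ i : Fin (n+1), if x i then -a i else 1) * (v x * v x))
      = ∑ p : (Fin n → Bool) × Bool,
          (∏ i : Fin (n+1), if (Fin.snoc p.1 p.2 : Fin (n+1) → Bool) i then -a i else 1)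
            * (v (Fin.snoc p.1 p.2) * v (Fin.snoc p.1 p.2)) :=
    (Fintype.sum_equiv (snocEquiv n)
      (fun p => (∏ i : Fin (n+1), if (Fin.snoc p.1 p.2 : Fin (n+1) → Bool) i then -a i else 1)
            * (v (Fin.snoc p.1 p.2) * v (Fin.snoc p.1 p.2)))
      (fun x => (∏ i : Fin (n+1), if x i then -a i else 1) * (v x * v x))
      (fun p => rfl)).symm
  rw [hre, Fintype.sum_prod_type]
  simp only [Fintype.sum_bool, weight_snoc, if_true, if_false, mul_one]
  rw [Finset.mul_sum, ← Finset.sum_add_distrib]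
  refine Finset.sum_congr rfl fun s _ => ?_
  simp only [Bool.false_eq_true, Bool.true_eq_false, if_false, if_true, mul_one]
  ring

lemma pfister_round (F : Type*) [Field F] (n : ℕ) :
    ∀ (a : Fin n → F) (t : F), t ≠ 0 → (∃ v, pfisterForm F a v = t) →
      ((t • pfisterForm F a).Equivalent (pfisterForm F a)) := by
  induction n with
  | zero =>
    rintro a t ht ⟨v, hv⟩
    have hv' : pfisterForm F a v = v (fun _ => false) * v (fun _ => false) := by
      simp [pfisterForm, QuadraticMap.weightedSumSquares_apply, Finset.univ_unique,
        smul_eq_mul]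
      congr 1 <;> exact congrArg v (Subsingleton.elim _ _)
    subst hv
    rw [hv']
    exact sq_smul_equiv _ (fun h => ht (by rw [hv', h, mul_zero]))
  | succ n ih =>
    rintro a t ht ⟨v, hv⟩
    obtain ⟨E⟩ := pfister_split F a
    set ψ := pfisterForm F (fun i : Fin n => a i.castSucc) with hψ
    set c := -a (Fin.last n) with hc
    have hExy : (ψ.prod (c • ψ)) (E v) = t := by rw [E.map_app v, hv]
    set x := ψ (E v).1 with hxdef
    set y := ψ (E v).2 with hydef
    have htxy : t = x + c * y := by
      rw [← hExy, QuadraticMap.prod_apply, QuadraticMap.smul_apply, smul_eq_mul]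
    have ihx : x ≠ 0 → ((x • ψ).Equivalent ψ) := fun h0 =>
      ih (fun i => a i.castSucc) x h0 ⟨(E v).1, hxdef.symm⟩
    have ihy : y ≠ 0 → ((y • ψ).Equivalent ψ) := fun h0 =>
      ih (fun i => a i.castSucc) y h0 ⟨(E v).2, hydef.symm⟩
    have main : (t • (ψ.prod (c • ψ))).Equivalent (ψ.prod (c • ψ)) := by
      by_cases hy0 : y = 0
      · have htx : t = x := by rw [htxy, hy0, mul_zero, add_zero]
        have hx0 : x ≠ 0 := htx ▸ ht
        have h1 : t • (ψ.prod (c • ψ)) = (x • ψ).prod (c • (x • ψ)) := by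
          rw [htx, smul_prod_eq]
          congr 1
          rw [smul_smul, smul_smul, mul_comm]
        rw [h1]
        exact QuadraticMap.Equivalent.prod (ihx hx0) (smul_equiv_congr c (ihx hx0))
      · have hyE := ihy hy0
        have hcy : ((c * y) • ψ).Equivalent (c • ψ) := by
          have h2 : (c * y) • ψ = c • (y • ψ) := by rw [smul_smul]
          rw [h2]
          exact smul_equiv_congr c hyE
        have E2 : (ψ.prod (c • ψ)).Equivalent (ψ.prod ((c * y) • ψ)) :=
          QuadraticMap.Equivalent.prod (QuadraticMap.Equivalent.refl ψ) hcy.symm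
        by_cases hx0 : x = 0
        · have htc : t = c * y := by rw [htxy, hx0, zero_add]
          have hK : ((t • (ψ.prod ((c * y) • ψ))).Equivalent (ψ.prod ((c * y) • ψ))) := by
            have hk0 := key ψ (c * y) 0 1
              (by rw [show (0:F)*0 + (c*y)*(1*1) = c*y by ring, ← htc]; exact ht)
            rw [show (0:F)*0 + (c*y)*(1*1) = c*y by ring] at hk0
            rw [htc]
            exact hk0
          exact ((smul_equiv_congr t E2).trans hK).trans E2.symm
        · have hxE := ihx hx0
          set c' := c * y * x⁻¹ with hc'
          have hxc' : x * c' = c * y := by rw [hc']; field_simp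
          have ht' : (1:F) * 1 + c' * (1 * 1) = t * x⁻¹ := by
            rw [htxy, hc']; field_simp
          have htne : (1:F) * 1 + c' * (1 * 1) ≠ 0 := by
            rw [ht']
            exact mul_ne_zero ht (inv_ne_zero hx0)
          have hK := key ψ c' 1 1 htne
          have hc'e : ((c * y) • ψ).Equivalent (c' • ψ) := by
            have h5 : (c * y) • ψ = c' • (x • ψ) := by rw [smul_smul, mul_comm c' x, hxc']
            rw [h5]
            exact smul_equiv_congr c' hxE
          have E4 : (ψ.prod (c' • ψ)).Equivalent (ψ.prod ((c * y) • ψ)) :=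
            QuadraticMap.Equivalent.prod (QuadraticMap.Equivalent.refl ψ) hc'e.symm
          have h6 : t • (ψ.prod (c' • ψ))
              = x • (((1:F) * 1 + c' * (1 * 1)) • (ψ.prod (c' • ψ))) := by
            rw [smul_smul, ht']
            congr 1
            field_simp
          have h7 : x • (ψ.prod (c' • ψ)) = (x • ψ).prod ((c * y) • ψ) := by
            rw [smul_prod_eq]
            congr 1
            rw [smul_smul, hxc']
          have E3 : (x • (ψ.prod (c' • ψ))).Equivalent (ψ.prod ((c * y) • ψ)) := by
            rw [h7]
            exact QuadraticMap.Equivalent.prod hxE (QuadraticMap.Equivalent.refl _)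
          have step1 : (t • (ψ.prod (c • ψ))).Equivalent (t • (ψ.prod ((c * y) • ψ))) :=
            smul_equiv_congr t E2
          have step2 : (t • (ψ.prod ((c * y) • ψ))).Equivalent (t • (ψ.prod (c' • ψ))) :=
            smul_equiv_congr t E4.symm
          have step3 : (t • (ψ.prod (c' • ψ))).Equivalent (ψ.prod ((c * y) • ψ)) := by
            rw [h6]
            exact (smul_equiv_congr x hK).trans E3
          exact ((step1.trans step2).trans step3).trans E2.symm
    exact ((smul_equiv_congr t ⟨E⟩).trans main).trans (QuadraticMap.Equivalent.symm ⟨E⟩)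

lemma pfister_single (F : Type*) [Field F] {n : ℕ} (a : Fin n → F) (s : Fin n → Bool) :
    pfisterForm F a (Pi.single s 1) = ∏ i, if s i then -a i else 1 := by
  classical
  simp only [pfisterForm, QuadraticMap.weightedSumSquares_apply, smul_eq_mul]
  rw [Finset.sum_eq_single s]
  · simp [Pi.single_eq_same]
  · intro b _ hb
    simp [Pi.single_apply, if_neg hb]
  · intro h; exact absurd (Finset.mem_univ _) h

lemma pfister_one (F : Type*) [Field F] {n : ℕ} (a : Fin n → F) :
    pfisterForm F a (Pi.single (fun _ => false) 1) = 1 := by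
  rw [pfister_single]
  simp

lemma represents_of_equiv {F : Type*} [Field F] {n : ℕ} {a : Fin n → F} {l : F}
    (h : (l • pfisterForm F a).Equivalent (pfisterForm F a)) :
    ∃ v, pfisterForm F a v = l := by
  obtain ⟨E⟩ := h
  refine ⟨E (Pi.single (fun _ => false) 1), ?_⟩
  rw [E.map_app, QuadraticMap.smul_apply, pfister_one, smul_eq_mul, mul_one]

lemma polar_single (F : Type*) [Field F] {n : ℕ} (a : Fin n → F) (v : (Fin n → Bool) → F)
    (s : Fin n → Bool) :
    QuadraticMap.polar (pfisterForm F a) v (Pi.single s 1)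
      = 2 * ((∏ i, if s i then -a i else 1) * v s) := by
  classical
  simp only [QuadraticMap.polar, pfisterForm, QuadraticMap.weightedSumSquares_apply,
    smul_eq_mul, Pi.add_apply]
  rw [← Finset.sum_sub_distrib, ← Finset.sum_sub_distrib]
  rw [Finset.sum_eq_single s]
  · simp only [Pi.single_eq_same]
    ring
  · intro b _ hb
    simp only [Pi.single_apply, if_neg hb, add_zero, mul_zero]
    ring
  · intro h; exact absurd (Finset.mem_univ _) h

lemma pfister_universal {F : Type*} [Field F] (hchar : (2:F) ≠ 0) {n : ℕ} (a : Fin n → F)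
    (ha : ∀ i, a i ≠ 0) (hiso : ¬ (pfisterForm F a).Anisotropic) (l : F) :
    ∃ w, pfisterForm F a w = l := by
  classical
  rw [QuadraticMap.Anisotropic] at hiso
  push_neg at hiso
  obtain ⟨v, hv0, hvne⟩ := hiso
  obtain ⟨s, hs⟩ : ∃ s, v s ≠ 0 := Function.ne_iff.mp hvne
  set w0 := ∏ i, if s i then -a i else 1 with hw0def
  have hw0 : w0 ≠ 0 := Finset.prod_ne_zero_iff.mpr fun i _ => by
    split
    · exact neg_ne_zero.mpr (ha i)
    · exact one_ne_zero
  have hb : (2 * (w0 * v s)) ≠ 0 := mul_ne_zero hchar (mul_ne_zero hw0 hs)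
  set r := (l - w0) * (2 * (w0 * v s))⁻¹ with hr
  refine ⟨r • v + (1:F) • (Pi.single s (1:F) : (Fin n → Bool) → F), ?_⟩
  rw [expand, hv0, polar_single, pfister_single, ← hw0def]
  rw [hr]
  field_simp
  ring

end PfisterAux

/-- for an `n`-fold Pfister form `φ` over a field `F` (char ≠ 2) with
slots `a i ∈ F*`, the group of similarity factors `G(φ) = {λ ∈ F* : λφ ≅ φ}` equals
the set `D(φ)` of nonzero values represented by `φ`.  In particular, if `φ` is
isotropic (hence hyperbolic) then `G(φ) = F*`. -/
theorem stmt7 (F : Type*) [Field F] (hchar : (2 : F) ≠ 0)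
    (n : ℕ) (a : Fin n → F) (ha : ∀ i, a i ≠ 0) :
    ({l : F | l ≠ 0 ∧ QuadraticMap.Equivalent (l • pfisterForm F a) (pfisterForm F a)}
      = {l : F | l ≠ 0 ∧ ∃ v, pfisterForm F a v = l}) ∧
    (¬ (pfisterForm F a).Anisotropic →
      ∀ l : F, l ≠ 0 →
        QuadraticMap.Equivalent (l • pfisterForm F a) (pfisterForm F a)) := by
  constructor
  · ext l
    simp only [Set.mem_setOf_eq]
    constructor
    · rintro ⟨hl, hE⟩
      exact ⟨hl, PfisterAux.represents_of_equiv hE⟩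
    · rintro ⟨hl, v, hv⟩
      exact ⟨hl, PfisterAux.pfister_round F n a l hl ⟨v, hv⟩⟩
  · intro hiso l hl
    exact PfisterAux.pfister_round F n a l hl (PfisterAux.pfister_universal hchar a ha hiso l)
end

section
/- Let F be a field with u-invariant at most 8 (every 9-dimensional quadratic form over F is isotropic). Then the spinor norm group of any 6-dimensional quadratic form q over F with trivial discriminant is all of F*: Sn(q) = F*. -/
open QuadraticMap in
lemma aux_universal {F V : Type*} [Field F] [Invertible (2 : F)] [AddCommGroup V] [Module F V]
    (q : QuadraticForm F V) (hreg : LinearMap.BilinForm.Nondegenerate (QuadraticMap.polarBilin q))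
    (z : V) (hz : z ≠ 0) (hqz : q z = 0) (a : F) : ∃ y : V, q y = a := by
  have h : ∃ u, polar q z u ≠ 0 := by
    by_contra h
    push_neg at h
    exact hz (hreg.1 z (fun n => by simpa using h n))
  obtain ⟨u, hu⟩ := h
  set c := polar q z u with hc
  set t := (a - q u) / c with ht
  refine ⟨t • z + u, ?_⟩
  have h1 : q (t • z + u) = q (t • z) + q u + polar q (t • z) u := by
    rw [polar]; ring
  rw [h1, QuadraticMap.map_smul, polar_smul_left, hqz, ht]
  simp only [smul_eq_mul, mul_zero, zero_add, ← hc]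
  field_simp
  ring

/-- let `F` be a field (char ≠ 2) with u-invariant at most 8, i.e.
every 9-dimensional quadratic form over `F` is isotropic.  Then for any
nondegenerate 6-dimensional quadratic form `q` over `F` with trivial (signed)
discriminant, the spinor norm group is all of `F*` modulo squares:
`Sn(q)·F*² = F*`, where `Sn(q)` is generated by the products `q(v)·q(w)` over
anisotropic vectors `v, w`. -/
theorem stmt12 (F : Type*) [Field F] [Invertible (2 : F)]
    (hu : ∀ q9 : QuadraticForm F (Fin 9 → F), ¬ q9.Anisotropic)
    (V : Type*) [AddCommGroup V] [Module F V] [FiniteDimensional F V]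
    (q : QuadraticForm F V)
    (hreg : LinearMap.BilinForm.Nondegenerate (QuadraticMap.polarBilin q))
    (hdim : Module.finrank F V = 6)
    (hdisc : ∃ (b : Module.Basis (Fin 6) F V) (c : F), c ≠ 0 ∧
      -((LinearMap.toMatrix₂ b b (QuadraticMap.associated (R := F) q)).det) = c ^ 2) :
    ∀ l : Fˣ, l ∈ Subgroup.closure
      ({x : Fˣ | ∃ v w : V, q v ≠ 0 ∧ q w ≠ 0 ∧ (x : F) = q v * q w}
        ∪ {x : Fˣ | ∃ y : Fˣ, x = y ^ 2}) := by
  obtain ⟨b, -, -, -⟩ := hdisc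
  intro l
  -- two linear maps (Fin 9 → F) →ₗ V
  set L1 : (Fin 9 → F) →ₗ[F] V :=
    ∑ i : Fin 6, LinearMap.smulRight (LinearMap.proj (Fin.castAdd 3 i)) (b i) with hL1
  set L2 : (Fin 9 → F) →ₗ[F] V :=
    ∑ i : Fin 3, LinearMap.smulRight (LinearMap.proj (Fin.natAdd 6 i)) (b (Fin.castLE (by norm_num) i)) with hL2
  have hL1a : ∀ x, L1 x = ∑ i : Fin 6, x (Fin.castAdd 3 i) • b i := by
    intro x; simp [hL1, LinearMap.sum_apply]
  have hL2a : ∀ x, L2 x = ∑ i : Fin 3, x (Fin.natAdd 6 i) • b (Fin.castLE (by norm_num) i) := by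
    intro x; simp [hL2, LinearMap.sum_apply]
  have hinj : ∀ x : Fin 9 → F, L1 x = 0 → L2 x = 0 → x = 0 := by
    intro x h1 h2
    rw [hL1a] at h1
    rw [hL2a] at h2
    have i1 := Fintype.linearIndependent_iff.mp b.linearIndependent _ h1
    have li2 : LinearIndependent F (fun i : Fin 3 => b (Fin.castLE (by norm_num) i)) :=
      b.linearIndependent.comp _ (Fin.castLE_injective _)
    have i2 := Fintype.linearIndependent_iff.mp li2 _ h2
    funext j
    rcases lt_or_ge (j : ℕ) 6 with h | h
    · have := i1 ⟨j, h⟩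
      simpa [Fin.castAdd, Fin.ext_iff] using this
    · have := i2 ⟨(j : ℕ) - 6, by omega⟩
      have hj : Fin.natAdd 6 (⟨(j : ℕ) - 6, by omega⟩ : Fin 3) = j := by
        simp [Fin.ext_iff]; omega
      rwa [hj] at this
  set q9 : QuadraticForm F (Fin 9 → F) := q.comp L1 - (l : F) • q.comp L2 with hq9
  have h9 := hu q9
  rw [QuadraticMap.Anisotropic] at h9
  push_neg at h9
  obtain ⟨x, hx0, hxne⟩ := h9
  have hval : q (L1 x) = (l : F) * q (L2 x) := by
    have : q9 x = q (L1 x) - (l : F) * q (L2 x) := by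
      simp [hq9, QuadraticMap.sub_apply, QuadraticMap.smul_apply, QuadraticMap.comp_apply,
        smul_eq_mul]
    rw [hx0] at this
    exact sub_eq_zero.mp this.symm
  set v := L1 x with hv
  set w := L2 x with hw
  by_cases hqw : q w = 0
  · -- isotropic case: q is universal
    have hqv : q v = 0 := by rw [hval, hqw, mul_zero]
    have hz : ∃ z : V, z ≠ 0 ∧ q z = 0 := by
      by_cases hv0 : v = 0
      · refine ⟨w, ?_, hqw⟩
        intro hw0
        exact hxne (hinj x hv0 hw0)
      · exact ⟨v, hv0, hqv⟩
    obtain ⟨z, hz0, hqz⟩ := hz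
    obtain ⟨v1, hv1⟩ := aux_universal q hreg z hz0 hqz 1
    obtain ⟨w1, hw1⟩ := aux_universal q hreg z hz0 hqz (l : F)
    apply Subgroup.subset_closure
    left
    exact ⟨v1, w1, by rw [hv1]; exact one_ne_zero, by rw [hw1]; exact l.ne_zero,
      by rw [hv1, hw1, one_mul]⟩
  · -- q w ≠ 0, so l = (q v * q w) * ((q w)⁻¹)²
    have hqv : q v ≠ 0 := by
      rw [hval]
      exact mul_ne_zero l.ne_zero hqw
    set u0 : Fˣ := (Units.mk0 (q w) hqw)⁻¹ with hu0
    set g : Fˣ := Units.mk0 (q v * q w) (mul_ne_zero hqv hqw) with hg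
    have hlg : l = g * u0 ^ 2 := by
      apply Units.ext
      push_cast [hg, hu0]
      field_simp
      simp only [Units.val_mk0]
      rw [hval, eq_div_iff (pow_ne_zero 2 hqw)]; ring
    rw [hlg]
    refine Subgroup.mul_mem _ ?_ ?_
    · exact Subgroup.subset_closure (Or.inl ⟨v, w, hqv, hqw, rfl⟩)
    · exact Subgroup.subset_closure (Or.inr ⟨u0, rfl⟩)
end
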